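/- If e has primal type t in a delta-matroid D (i.e., e is a non-orientable ribbon loop), then the minimum-cardinality feasible sets of D * e coincide with those of D: F_min(D * e) = F_min(D). -/
import Mathlib


/-- The twist of a set system with respect to a subset `A`. -/
def twistSys {α : Type*} [DecidableEq α] (𝓕 : Finset (Finset α)) (A : Finset α) :
    Finset (Finset α) :=
  𝓕.image (fun X => symmDiff A X)

/-- The Symmetric Exchange Axiom for a set system. -/
def SEA {α : Type*} [DecidableEq α] (𝓕 : Finset (Finset α)) : Prop :=
  ∀ X ∈ 𝓕, ∀ Y ∈ 𝓕, ∀ u ∈ symmDiff X Y, ∃ v ∈ symmDiff X Y,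
    symmDiff X ({u, v} : Finset α) ∈ 𝓕

/-- Minimum cardinality of a feasible set. -/
noncomputable def rmin {α : Type*} (𝓕 : Finset (Finset α)) : ℕ :=
  sInf {n | ∃ F ∈ 𝓕, F.card = n}

section Aux

variable {α : Type*} [DecidableEq α]

lemma rmin_le {𝓕 : Finset (Finset α)} {F : Finset α} (hF : F ∈ 𝓕) : rmin 𝓕 ≤ F.card :=
  Nat.sInf_le ⟨F, hF, rfl⟩

lemma exists_rmin {𝓕 : Finset (Finset α)} (hne : 𝓕.Nonempty) :
    ∃ F ∈ 𝓕, F.card = rmin 𝓕 := by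
  obtain ⟨F, hF⟩ := hne
  exact Nat.sInf_mem (⟨F.card, F, hF, rfl⟩ : {n | ∃ F ∈ 𝓕, F.card = n}.Nonempty)

lemma mem_twist {𝓕 : Finset (Finset α)} {A X : Finset α} :
    X ∈ twistSys 𝓕 A ↔ ∃ F ∈ 𝓕, symmDiff A F = X := by
  simp [twistSys]

lemma sd_erase {e : α} {F : Finset α} (h : e ∈ F) : symmDiff {e} F = F.erase e := by
  ext a
  simp only [Finset.mem_symmDiff, Finset.mem_singleton, Finset.mem_erase]
  constructor
  · rintro (⟨rfl, hF⟩ | ⟨hF, hne⟩)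
    · exact absurd h hF
    · exact ⟨hne, hF⟩
  · rintro ⟨hne, hF⟩; exact Or.inr ⟨hF, hne⟩

lemma sd_insert {e : α} {F : Finset α} (h : e ∉ F) : symmDiff {e} F = insert e F := by
  ext a
  simp only [Finset.mem_symmDiff, Finset.mem_singleton, Finset.mem_insert]
  constructor
  · rintro (⟨rfl, _⟩ | ⟨hF, _⟩)
    · exact Or.inl rfl
    · exact Or.inr hF
  · rintro (rfl | hF)
    · exact Or.inl ⟨rfl, h⟩
    · exact Or.inr ⟨hF, fun he => h (he ▸ hF)⟩

lemma twist_SEA {𝓕 : Finset (Finset α)} (A : Finset α) (h : SEA 𝓕) :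
    SEA (twistSys 𝓕 A) := by
  intro X hX Y hY u hu
  obtain ⟨X0, hX0, rfl⟩ := mem_twist.1 hX
  obtain ⟨Y0, hY0, rfl⟩ := mem_twist.1 hY
  have hdiff : symmDiff (symmDiff A X0) (symmDiff A Y0) = symmDiff X0 Y0 := by
    ext a
    simp only [Finset.mem_symmDiff]
    tauto
  rw [hdiff] at hu ⊢
  obtain ⟨v, hv, hmem⟩ := h X0 hX0 Y0 hY0 u hu
  refine ⟨v, hv, mem_twist.2 ⟨symmDiff X0 {u, v}, hmem, ?_⟩⟩
  exact (symmDiff_assoc A X0 _).symm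

/-- Key lemma: under the primal type t hypotheses, adding `e` to any minimum
feasible set yields a feasible set. -/
lemma claimA (𝓕 : Finset (Finset α)) (hSEA : SEA 𝓕) (e : α)
    (h1 : ∀ F ∈ 𝓕, F.card = rmin 𝓕 → e ∉ F)
    (h2 : ∃ F ∈ 𝓕, F.card = rmin 𝓕 + 1 ∧ e ∈ F)
    {G : Finset α} (hG : G ∈ 𝓕) (hGcard : G.card = rmin 𝓕) :
    insert e G ∈ 𝓕 := by
  classical
  set r := rmin 𝓕 with hr
  obtain ⟨F0, hF0, hF0c, heF0⟩ := h2
  obtain ⟨F, hFmem, hFmin⟩ := Finset.exists_min_image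
    (𝓕.filter fun F => F.card = r + 1 ∧ e ∈ F) (fun F => (symmDiff F G).card)
    ⟨F0, by simp [hF0, hF0c, heF0]⟩
  simp only [Finset.mem_filter] at hFmem
  obtain ⟨hF, hFc, heF⟩ := hFmem
  have heG : e ∉ G := h1 G hG hGcard
  by_cases hcase : ∃ u ∈ F, u ∉ G ∧ u ≠ e
  · exfalso
    obtain ⟨u, huF, huG, hue⟩ := hcase
    have hu : u ∈ symmDiff F G := by
      simp [Finset.mem_symmDiff, huF, huG]
    obtain ⟨v, hv, hZ⟩ := hSEA F hF G hG u hu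
    set Z := symmDiff F ({u, v} : Finset α) with hZdef
    have hrZ : r ≤ Z.card := rmin_le hZ
    by_cases hvu : v = u
    · -- Z = F.erase u : a minimum feasible set containing e, contradiction
      subst hvu
      have hZeq : Z = F.erase v := by
        ext a
        simp only [hZdef, Finset.mem_symmDiff, Finset.mem_insert, Finset.mem_singleton,
          Finset.mem_erase]
        constructor
        · rintro (⟨haF, hnot⟩ | ⟨(rfl | rfl), hnF⟩)
          · push_neg at hnot
            exact ⟨hnot.1, haF⟩
          · exact absurd huF hnF
          · exact absurd huF hnF
        · rintro ⟨hav, haF⟩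
          exact Or.inl ⟨haF, by simp [hav]⟩
      have hZc : Z.card = r := by
        rw [hZeq, Finset.card_erase_of_mem huF, hFc]
        omega
      have heZ : e ∈ Z := by
        rw [hZeq]; exact Finset.mem_erase.2 ⟨Ne.symm hue, heF⟩
      exact h1 Z hZ hZc heZ
    · by_cases hvF : v ∈ F
      · -- Z has cardinality r - 1 < r, contradiction
        have hZeq : Z = (F.erase u).erase v := by
          ext a
          simp only [hZdef, Finset.mem_symmDiff, Finset.mem_insert, Finset.mem_singleton,
            Finset.mem_erase]
          constructor
          · rintro (⟨haF, hnot⟩ | ⟨(rfl | rfl), hnF⟩)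
            · push_neg at hnot
              exact ⟨hnot.2, hnot.1, haF⟩
            · exact absurd huF hnF
            · exact absurd hvF hnF
          · rintro ⟨hav, hau, haF⟩
            exact Or.inl ⟨haF, by tauto⟩
        have hvFu : v ∈ F.erase u := Finset.mem_erase.2 ⟨hvu, hvF⟩
        have h1' : 1 ≤ (F.erase u).card := Finset.card_pos.2 ⟨v, hvFu⟩
        have hc1 : (F.erase u).card = F.card - 1 := Finset.card_erase_of_mem huF
        have hc2 : Z.card = (F.erase u).card - 1 := by
          rw [hZeq, Finset.card_erase_of_mem hvFu]
        omega
      · -- v ∈ G \ F : Z is closer to G, contradicting minimality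
        have hvG : v ∈ G := by
          rcases Finset.mem_symmDiff.1 hv with ⟨h', _⟩ | ⟨h', _⟩
          · exact absurd h' hvF
          · exact h'
        have hve : v ≠ e := fun h => heG (h ▸ hvG)
        have hZeq : Z = insert v (F.erase u) := by
          ext a
          simp only [hZdef, Finset.mem_symmDiff, Finset.mem_insert, Finset.mem_singleton,
            Finset.mem_erase]
          constructor
          · rintro (⟨haF, hnot⟩ | ⟨(rfl | rfl), hnF⟩)
            · push_neg at hnot
              exact Or.inr ⟨hnot.1, haF⟩
            · exact absurd huF hnF
            · exact Or.inl rfl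
          · rintro (rfl | ⟨hau, haF⟩)
            · exact Or.inr ⟨Or.inr rfl, hvF⟩
            · refine Or.inl ⟨haF, ?_⟩
              rintro (h | h)
              · exact hau h
              · exact hvF (h ▸ haF)
        have hvFu : v ∉ F.erase u := fun h => hvF (Finset.mem_of_mem_erase h)
        have hZc : Z.card = r + 1 := by
          rw [hZeq, Finset.card_insert_of_notMem hvFu, Finset.card_erase_of_mem huF, hFc]
          omega
        have heZ : e ∈ Z := by
          rw [hZeq]
          exact Finset.mem_insert_of_mem (Finset.mem_erase.2 ⟨Ne.symm hue, heF⟩)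
        -- symmDiff Z G ⊂ symmDiff F G
        have hpair : ({u, v} : Finset α) ⊆ symmDiff F G := by
          intro a ha
          rcases Finset.mem_insert.1 ha with rfl | ha
          · exact hu
          · rw [Finset.mem_singleton] at ha; exact ha ▸ hv
        have hZG : symmDiff Z G = symmDiff F G \ {u, v} := by
          rw [hZdef, symmDiff_right_comm]
          exact symmDiff_of_ge hpair
        have hss : symmDiff Z G ⊂ symmDiff F G := by
          rw [hZG]
          exact Finset.sdiff_ssubset hpair ⟨u, Finset.mem_insert_self u _⟩
        have hle := hFmin Z (Finset.mem_filter.2 ⟨hZ, hZc, heZ⟩)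
        exact absurd hle (not_le.2 (Finset.card_lt_card hss))
  · push_neg at hcase
    have hsub : F ⊆ insert e G := by
      intro a ha
      by_cases haG : a ∈ G
      · exact Finset.mem_insert_of_mem haG
      · rw [hcase a ha haG]; exact Finset.mem_insert_self e G
    have hFeq : F = insert e G :=
      Finset.eq_of_subset_of_card_le hsub (by
        rw [Finset.card_insert_of_notMem heG, hGcard, hFc])
    rwa [← hFeq]

lemma twist_card_ge (𝓕 : Finset (Finset α)) (e : α)
    (h1 : ∀ F ∈ 𝓕, F.card = rmin 𝓕 → e ∉ F) :
    ∀ X ∈ twistSys 𝓕 {e}, rmin 𝓕 ≤ X.card := by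
  intro X hX
  obtain ⟨F, hF, rfl⟩ := mem_twist.1 hX
  have hle := rmin_le hF
  by_cases heF : e ∈ F
  · have hne : F.card ≠ rmin 𝓕 := fun h => h1 F hF h heF
    rw [sd_erase heF, Finset.card_erase_of_mem heF]
    omega
  · rw [sd_insert heF, Finset.card_insert_of_notMem heF]
    omega

lemma rmin_twist (𝓕 : Finset (Finset α)) (e : α)
    (h1 : ∀ F ∈ 𝓕, F.card = rmin 𝓕 → e ∉ F)
    (h2 : ∃ F ∈ 𝓕, F.card = rmin 𝓕 + 1 ∧ e ∈ F) :
    rmin (twistSys 𝓕 {e}) = rmin 𝓕 := by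
  obtain ⟨F0, hF0, hF0c, heF0⟩ := h2
  have hmem : symmDiff {e} F0 ∈ twistSys 𝓕 {e} := mem_twist.2 ⟨F0, hF0, rfl⟩
  have hcard : (symmDiff {e} F0).card = rmin 𝓕 := by
    rw [sd_erase heF0, Finset.card_erase_of_mem heF0, hF0c]; omega
  apply le_antisymm
  · rw [← hcard]; exact rmin_le hmem
  · obtain ⟨X, hX, hXc⟩ := exists_rmin ⟨_, hmem⟩
    rw [← hXc]
    exact twist_card_ge 𝓕 e h1 X hX

end Aux

/-- If `e` has primal type `t` in a delta-matroid `D`, then the minimum-cardinality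
feasible sets of `D * e` coincide with those of `D`. -/
theorem typeT_min_twist {α : Type*} [DecidableEq α] (𝓕 : Finset (Finset α))
    (hne : 𝓕.Nonempty) (hSEA : SEA 𝓕) (e : α)
    (h1 : ∀ F ∈ 𝓕, F.card = rmin 𝓕 → e ∉ F)
    (h2 : ∃ F ∈ 𝓕, F.card = rmin 𝓕 + 1 ∧ e ∈ F) :
    {F ∈ twistSys 𝓕 {e} | F.card = rmin (twistSys 𝓕 {e})} =
      {F ∈ 𝓕 | F.card = rmin 𝓕} := by
  classical
  have hrt : rmin (twistSys 𝓕 {e}) = rmin 𝓕 := rmin_twist 𝓕 e h1 h2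
  -- e is in no minimum feasible set of the twist
  have h1' : ∀ X ∈ twistSys 𝓕 {e}, X.card = rmin (twistSys 𝓕 {e}) → e ∉ X := by
    intro X hX hXc heX
    obtain ⟨F, hF, rfl⟩ := mem_twist.1 hX
    by_cases heF : e ∈ F
    · rw [sd_erase heF] at heX
      exact (Finset.mem_erase.1 heX).1 rfl
    · rw [sd_insert heF, Finset.card_insert_of_notMem heF, hrt] at hXc
      have := rmin_le hF
      omega
  -- the twist has a feasible set of size rmin + 1 containing e
  have h2' : ∃ X ∈ twistSys 𝓕 {e}, X.card = rmin (twistSys 𝓕 {e}) + 1 ∧ e ∈ X := by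
    obtain ⟨G, hG, hGc⟩ := exists_rmin hne
    have heG : e ∉ G := h1 G hG hGc
    refine ⟨symmDiff {e} G, mem_twist.2 ⟨G, hG, rfl⟩, ?_, ?_⟩
    · rw [sd_insert heG, Finset.card_insert_of_notMem heG, hGc, hrt]
    · rw [sd_insert heG]; exact Finset.mem_insert_self e G
  ext X
  simp only [Finset.mem_filter]
  constructor
  · rintro ⟨hX, hXc⟩
    have heX : e ∉ X := h1' X hX hXc
    have hins : insert e X ∈ twistSys 𝓕 {e} :=
      claimA (twistSys 𝓕 {e}) (twist_SEA {e} hSEA) e h1' h2' hX hXc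
    obtain ⟨F, hF, hFeq⟩ := mem_twist.1 hins
    by_cases heF : e ∈ F
    · rw [sd_erase heF] at hFeq
      exact absurd (hFeq ▸ Finset.mem_insert_self e X)
        (fun h => (Finset.mem_erase.1 h).1 rfl)
    · rw [sd_insert heF] at hFeq
      have hXF : X = F := by
        have h1 : X = (insert e X).erase e := by
          rw [Finset.erase_insert heX]
        have h2 : F = (insert e F).erase e := by
          rw [Finset.erase_insert heF]
        rw [h1, ← hFeq, hFeq, h2, hFeq]
      rw [hXF]
      exact ⟨hF, by rw [← hXF, hXc, hrt]⟩
  · rintro ⟨hX, hXc⟩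
    have heX : e ∉ X := h1 X hX hXc
    have hins : insert e X ∈ 𝓕 := claimA 𝓕 hSEA e h1 h2 hX hXc
    have : symmDiff {e} (insert e X) = X := by
      rw [sd_erase (Finset.mem_insert_self e X), Finset.erase_insert heX]
    refine ⟨mem_twist.2 ⟨insert e X, hins, this⟩, by rw [hXc, hrt]⟩
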